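/- Let N, D, K be positive natural numbers, let A be a real N×N matrix, let ε₁,…,ε_K be real numbers, and let W⁽¹⁾,…,W⁽ᴷ⁾ be real D×D matrices. For an input X ∈ ℝ^{N×D} define H⁽⁰⁾ = X and H⁽ᵏ⁾ = σ((ε_k·I_N + A)·H⁽ᵏ⁻¹⁾·W⁽ᵏ⁾) with σ the entrywise ReLU, and define the mean-READOUT graph representation h_G = (H⁽ᴷ⁾)ᵀ·φ_mean ∈ ℝ^D, where φ_mean = (1/N,…,1/N)ᵀ ∈ ℝ^N. Then h_G = Σ_{i=1}^{ND} ⟨b_i(X), vec(X)⟩ · b̃_i, where b̃_i ∈ ℝ^D is the i-th column of the fixed matrix I_D ⊗ φ_meanᵀ, which is independent of the input X, while b_i(X) is the i-th column of the input-dependent encoder matrix E⁽¹⁾·Σ⁽¹⁾(X) ⋯ E⁽ᴷ⁾·Σ⁽ᴷ⁾(X) with E⁽ᵏ⁾ = W⁽ᵏ⁾ ⊗ (ε_k·I_N + Aᵀ) and Σ⁽ᵏ⁾(X) the 0/1 diagonal ReLU activation-pattern matrices of layer k. In particular, the mean READOUT generates a decoder with fixed constant bases b̃_i that do not depend on the input.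 -/

import Mathlib

open Matrix Kronecker

/-- Column-stacking vectorization of a real matrix: `vec M (j, i) = M i j`. -/
def vec {n p : ℕ} (M : Matrix (Fin n) (Fin p) ℝ) : Fin p × Fin n → ℝ :=
  fun x => M x.2 x.1

/-- The mean READOUT h_G = (H⁽ᴷ⁾)ᵀ·φ_mean of a K-layer GIN decomposes as
h_G = Σᵢ ⟨bᵢ(X), vec(X)⟩ · b̃ᵢ, where b̃ᵢ is the i-th column of the fixed matrix
I_D ⊗ φ_meanᵀ (independent of X), and bᵢ(X) is the i-th column of the input-dependent
encoder matrix E⁽¹⁾Σ⁽¹⁾ ⋯ E⁽ᴷ⁾Σ⁽ᴷ⁾, with E⁽ᵏ⁾ = W⁽ᵏ⁾ ⊗ (ε_k·I + Aᵀ) and Σ⁽ᵏ⁾ the 0/1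
diagonal ReLU activation-pattern matrices of the layers. -/
theorem mean_readout_fixed_decoder (N D K : ℕ) (hN : 0 < N) (hD : 0 < D) (hK : 0 < K)
    (A : Matrix (Fin N) (Fin N) ℝ) (ε : ℕ → ℝ)
    (W : ℕ → Matrix (Fin D) (Fin D) ℝ)
    (X : Matrix (Fin N) (Fin D) ℝ)
    (H : ℕ → Matrix (Fin N) (Fin D) ℝ)
    (hH0 : H 0 = X)
    (hHk : ∀ k, H (k + 1) =
      ((ε (k + 1) • (1 : Matrix (Fin N) (Fin N) ℝ) + A) * H k * W (k + 1)).map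
        (fun y => max y 0)) :
    ∃ S : ℕ → Matrix (Fin D × Fin N) (Fin D × Fin N) ℝ,
      -- the Σ⁽ᵏ⁾ are diagonal with 0/1 diagonal entries
      (∀ k, (S k).IsDiag ∧ ∀ x, S k x x = 0 ∨ S k x x = 1) ∧
      -- the Σ⁽ᵏ⁾ are the ReLU activation-pattern matrices of the layers
      (∀ k, _root_.vec (H (k + 1)) =
        (S (k + 1)).mulVec
          (_root_.vec ((ε (k + 1) • (1 : Matrix (Fin N) (Fin N) ℝ) + A) * H k * W (k + 1)))) ∧
      -- h_G = Σᵢ ⟨bᵢ(X), vec X⟩ · b̃ᵢ with fixed decoder bases b̃ᵢ given by I_D ⊗ φ_meanᵀ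
      (fun j : Fin D × Fin 1 => (H K)ᵀ.mulVec (fun _ => (N : ℝ)⁻¹) j.1) =
        ∑ i : Fin D × Fin N,
          (∑ r : Fin D × Fin N,
              (((List.range K).map (fun k =>
                  (W (k + 1) ⊗ₖ
                    (ε (k + 1) • (1 : Matrix (Fin N) (Fin N) ℝ) + Aᵀ)) * S (k + 1))).prod)
                r i * _root_.vec X r) •
            (fun j : Fin D × Fin 1 =>
              ((1 : Matrix (Fin D) (Fin D) ℝ) ⊗ₖ
                ((fun (_ : Fin 1) (_ : Fin N) => (N : ℝ)⁻¹) :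
                  Matrix (Fin 1) (Fin N) ℝ)) j i) := by
  classical
  set pre : ℕ → Matrix (Fin N) (Fin D) ℝ :=
    fun k => (ε (k + 1) • (1 : Matrix (Fin N) (Fin N) ℝ) + A) * H k * W (k + 1) with hpre
  set S : ℕ → Matrix (Fin D × Fin N) (Fin D × Fin N) ℝ :=
    fun k => Nat.casesOn k 1
      (fun k => Matrix.diagonal (fun x => if 0 ≤ _root_.vec (pre k) x then (1 : ℝ) else 0)) with hS
  have hHmax : ∀ k x, _root_.vec (H (k + 1)) x = max (_root_.vec (pre k) x) 0 := by
    intro k x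
    simp [_root_.vec, hHk k, hpre]
  have hSdiag : ∀ k x, _root_.vec (pre k) x * (if 0 ≤ _root_.vec (pre k) x then (1 : ℝ) else 0)
      = _root_.vec (H (k + 1)) x := by
    intro k x
    rw [hHmax]
    by_cases h : 0 ≤ _root_.vec (pre k) x
    · simp [h, max_eq_left h]
    · simp [h, max_eq_right (le_of_lt (lt_of_not_ge h))]
  refine ⟨S, ?_, ?_, ?_⟩
  · rintro (_ | k)
    · exact ⟨Matrix.isDiag_one, fun x => Or.inr (Matrix.one_apply_eq x)⟩
    · refine ⟨Matrix.isDiag_diagonal _, fun x => ?_⟩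
      simp only [hS, Matrix.diagonal_apply_eq]
      split <;> simp
  · intro k
    funext x
    rw [hSdiag k x |>.symm]
    simp [hS, Matrix.mulVec_diagonal, mul_comm]
    rfl
  · -- key induction
    have key : ∀ k, _root_.vec (H k) = Matrix.vecMul (_root_.vec X)
        (((List.range k).map (fun k =>
          (W (k + 1) ⊗ₖ (ε (k + 1) • (1 : Matrix (Fin N) (Fin N) ℝ) + Aᵀ)) * S (k + 1))).prod) := by
      intro k
      induction k with
      | zero => simp [hH0]
      | succ k ih =>
        rw [List.range_succ, List.map_append, List.prod_append, List.map_singleton,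
          List.prod_singleton, ← Matrix.vecMul_vecMul, ← ih, ← Matrix.vecMul_vecMul]
        have hE : Matrix.vecMul (_root_.vec (H k))
            (W (k + 1) ⊗ₖ (ε (k + 1) • (1 : Matrix (Fin N) (Fin N) ℝ) + Aᵀ)) = _root_.vec (pre k) := by
          funext x
          obtain ⟨j, i⟩ := x
          simp only [Matrix.vecMul, dotProduct, _root_.vec, hpre, Matrix.mul_apply,
            Matrix.kroneckerMap_apply, Fintype.sum_prod_type, Matrix.add_apply,
            Matrix.smul_apply, Matrix.transpose_apply, Matrix.one_apply, smul_eq_mul,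
            Finset.sum_mul, Finset.mul_sum]
          rw [Finset.sum_comm]
          conv_rhs => rw [Finset.sum_comm]
          apply Finset.sum_congr rfl; intro i' _
          apply Finset.sum_congr rfl; intro j' _
          by_cases h : i' = i
          · subst h; simp only [if_pos rfl]; ring
          · rw [if_neg h, if_neg (fun hh => h hh.symm)]; ring
        rw [hE]
        funext x
        rw [← hSdiag k x]
        simp [hS, Matrix.vecMul_diagonal]
    funext j
    obtain ⟨j, c⟩ := j
    have hc : c = 0 := Subsingleton.elim _ _
    simp only [Finset.sum_apply, Pi.smul_apply, smul_eq_mul]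
    have hsum : ∀ i : Fin D × Fin N,
        (∑ r : Fin D × Fin N,
          (((List.range K).map (fun k =>
            (W (k + 1) ⊗ₖ (ε (k + 1) • (1 : Matrix (Fin N) (Fin N) ℝ) + Aᵀ)) * S (k + 1))).prod)
            r i * _root_.vec X r) = _root_.vec (H K) i := by
      intro i
      rw [key K]
      simp [Matrix.vecMul, dotProduct, mul_comm]
    simp only [hsum]
    simp only [Matrix.mulVec, dotProduct, Matrix.transpose_apply,
      Matrix.kroneckerMap_apply, Fintype.sum_prod_type, Matrix.one_apply, _root_.vec]
    rw [Finset.sum_comm]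
    show ∑ i, H K i j * (N:ℝ)⁻¹ = ∑ y, ∑ x, H K y x * ((1 : Matrix (Fin D) (Fin D) ℝ) j x * (N:ℝ)⁻¹)
    simp [Finset.sum_ite_eq, mul_comm, Matrix.one_apply]
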